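/- arXiv:math/0101235 — 2 statements merged into one kernel-verified Lean document; each statement's English description precedes it below -/
import Mathlib

section
/- For every n ≥ 0, every r ≥ 3, and every non-decreasing function f : ℕ → ℝ, the maximum of e_f(G) over all K_r-free graphs G on n vertices equals the maximum of e_f(H) over all complete (r−1)-partite graphs H on n vertices. -/
/-- `eSum f G = ∑_{x ∈ V} f(deg_G x)`. -/
noncomputable def eSum {V : Type*} [Fintype V] (f : ℕ → ℝ) (G : SimpleGraph V) : ℝ :=
  ∑ x : V, f ((G.neighborSet x).ncard)

/-- `H` is a complete `k`-partite graph: there is a partition of the vertices into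
`k` (possibly empty) classes such that two vertices are adjacent iff they lie in
different classes. -/
def IsCompleteMultipartite {V : Type*} (k : ℕ) (H : SimpleGraph V) : Prop :=
  ∃ c : V → Fin k, ∀ x y : V, H.Adj x y ↔ c x ≠ c y

lemma erdos : ∀ (k : ℕ) (V : Type) [Fintype V] (G : SimpleGraph V),
    G.CliqueFree (k + 1) →
    ∃ c : V → Fin k, ∀ v : V, (G.neighborSet v).ncard ≤ {y : V | c y ≠ c v}.ncard := by
  intro k
  induction k with
  | zero =>
    intro V _ G hG
    have hE : IsEmpty V := ⟨fun v => hG {v} ⟨by simp, by simp⟩⟩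
    exact ⟨fun v => (hE.false v).elim, fun v => (hE.false v).elim⟩
  | succ k ih =>
    intro V _ G hG
    classical
    by_cases hV : IsEmpty V
    · exact ⟨fun v => (hV.false v).elim, fun v => (hV.false v).elim⟩
    have hne : Nonempty V := not_isEmpty_iff.mp hV
    obtain ⟨x, hx⟩ := Finite.exists_max (fun v => (G.neighborSet v).ncard)
    set A : Set V := G.neighborSet x with hA
    -- induced graph on A is CliqueFree (k+1)
    have hcfA : (G.induce A).CliqueFree (k + 1) := by
      intro t ht
      have h0 : G.CliqueFreeOn (Set.univ : Set V) (k + 1 + 1) := hG.cliqueFreeOn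
      have h1 : G.CliqueFreeOn (Set.univ ∩ G.neighborSet x) (k + 1) :=
        SimpleGraph.CliqueFreeOn.of_succ G h0 (Set.mem_univ x)
      rw [Set.univ_inter] at h1
      refine h1 (t := t.image Subtype.val) ?_ ?_
      · intro y hy
        simp only [Finset.coe_image, Set.mem_image] at hy
        obtain ⟨z, _, rfl⟩ := hy
        exact z.2
      · constructor
        · intro a ha b hb hab
          simp only [Finset.coe_image, Set.mem_image] at ha hb
          obtain ⟨a', ha', rfl⟩ := ha
          obtain ⟨b', hb', rfl⟩ := hb
          exact ht.1 ha' hb' (fun h => hab (by rw [h]))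
        · rw [Finset.card_image_of_injective _ Subtype.val_injective, ht.2]
    obtain ⟨c', hc'⟩ := ih ↥A (G.induce A) hcfA
    refine ⟨fun v => if h : v ∈ A then (c' ⟨v, h⟩).succ else 0, fun v => ?_⟩
    by_cases hv : v ∈ A
    · -- v ∈ A
      have key : Set.ncard (G.neighborSet v) ≤
          Set.ncard (G.neighborSet v ∩ A) + Set.ncard Aᶜ := by
        calc Set.ncard (G.neighborSet v)
            = Set.ncard ((G.neighborSet v ∩ A) ∪ (G.neighborSet v ∩ Aᶜ)) := by
              rw [← Set.inter_union_distrib_left, Set.union_compl_self, Set.inter_univ]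
          _ ≤ Set.ncard (G.neighborSet v ∩ A) + Set.ncard (G.neighborSet v ∩ Aᶜ) :=
              Set.ncard_union_le _ _
          _ ≤ _ := Nat.add_le_add_left
              (Set.ncard_le_ncard Set.inter_subset_right (Set.toFinite _)) _
      have himg : Subtype.val '' ((G.induce A).neighborSet ⟨v, hv⟩) = G.neighborSet v ∩ A := by
        ext y
        simp only [Set.mem_image, SimpleGraph.mem_neighborSet, SimpleGraph.comap_adj,
          Function.Embedding.coe_subtype, Set.mem_inter_iff]
        constructor
        · rintro ⟨z, hz, rfl⟩
          exact ⟨hz.symm.symm, z.2⟩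
        · rintro ⟨hadj, hyA⟩
          exact ⟨⟨y, hyA⟩, hadj, rfl⟩
      have h1 : Set.ncard (G.neighborSet v ∩ A) =
          Set.ncard ((G.induce A).neighborSet ⟨v, hv⟩) := by
        rw [← himg, Set.ncard_image_of_injective _ Subtype.val_injective]
      have h2 : Set.ncard ((G.induce A).neighborSet ⟨v, hv⟩) ≤
          Set.ncard {y : ↥A | c' y ≠ c' ⟨v, hv⟩} := hc' ⟨v, hv⟩
      -- target set contains the disjoint union
      set T : Set V := {y : V | (if h : y ∈ A then (c' ⟨y, h⟩).succ else 0) ≠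
        (if h : v ∈ A then (c' ⟨v, h⟩).succ else 0)} with hT
      have hsub : (Subtype.val '' {y : ↥A | c' y ≠ c' ⟨v, hv⟩}) ∪ Aᶜ ⊆ T := by
        rintro y (hy | hy)
        · obtain ⟨z, hz, rfl⟩ := hy
          simp only [hT, Set.mem_setOf_eq, dif_pos z.2, dif_pos hv]
          intro h
          exact hz (Fin.succ_injective _ (by simpa using h))
        · simp only [hT, Set.mem_setOf_eq, dif_neg hy, dif_pos hv]
          exact fun h => (Fin.succ_ne_zero _ h.symm)
      have hdisj : Disjoint (Subtype.val '' {y : ↥A | c' y ≠ c' ⟨v, hv⟩}) Aᶜ := by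
        rw [Set.disjoint_right]
        rintro y hy ⟨z, _, rfl⟩
        exact hy z.2
      have hcard : Set.ncard {y : ↥A | c' y ≠ c' ⟨v, hv⟩} + Set.ncard Aᶜ ≤ Set.ncard T := by
        rw [← Set.ncard_image_of_injective {y : ↥A | c' y ≠ c' ⟨v, hv⟩} Subtype.val_injective,
          ← Set.ncard_union_eq hdisj (Set.toFinite _) (Set.toFinite _)]
        exact Set.ncard_le_ncard hsub (Set.toFinite _)
      calc Set.ncard (G.neighborSet v) ≤ Set.ncard (G.neighborSet v ∩ A) + Set.ncard Aᶜ := key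
        _ ≤ Set.ncard {y : ↥A | c' y ≠ c' ⟨v, hv⟩} + Set.ncard Aᶜ := by
            rw [h1]; gcongr
        _ ≤ Set.ncard T := hcard
    · -- v ∉ A
      have hsub : A ⊆ {y : V | (if h : y ∈ A then (c' ⟨y, h⟩).succ else 0) ≠
          (if h : v ∈ A then (c' ⟨v, h⟩).succ else 0)} := by
        intro y hy
        simp only [Set.mem_setOf_eq, dif_pos hy, dif_neg hv]
        exact Fin.succ_ne_zero _
      calc Set.ncard (G.neighborSet v) ≤ Set.ncard (G.neighborSet x) := hx v
        _ ≤ _ := Set.ncard_le_ncard hsub (Set.toFinite _)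

lemma cm_cliqueFree {V : Type*} [Fintype V] {k : ℕ} {H : SimpleGraph V}
    (h : IsCompleteMultipartite k H) : H.CliqueFree (k + 1) := by
  classical
  obtain ⟨c, hc⟩ := h
  intro t ht
  have hinj : Set.InjOn c ↑t := by
    intro a ha b hb hab
    by_contra hne
    exact (hc a b).mp (ht.1 ha hb hne) hab
  have := Finset.card_le_card_of_injOn c (fun a _ => Finset.mem_univ _) hinj
  rw [ht.2] at this
  simp at this

/-- For every `n ≥ 0`, `r ≥ 3` and non-decreasing `f : ℕ → ℝ`, the maximum of
`e_f` over `K_r`-free graphs on `n` vertices equals the maximum of `e_f` over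
complete `(r-1)`-partite graphs on `n` vertices. -/
theorem stmt1 (n r : ℕ) (hr : 3 ≤ r) (f : ℕ → ℝ) (hf : Monotone f) :
    sSup {y : ℝ | ∃ G : SimpleGraph (Fin n), G.CliqueFree r ∧ y = eSum f G} =
    sSup {y : ℝ | ∃ H : SimpleGraph (Fin n),
      IsCompleteMultipartite (r - 1) H ∧ y = eSum f H} := by
  classical
  have hr1 : r - 1 + 1 = r := by omega
  set S1 := {y : ℝ | ∃ G : SimpleGraph (Fin n), G.CliqueFree r ∧ y = eSum f G} with hS1
  set S2 := {y : ℝ | ∃ H : SimpleGraph (Fin n),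
      IsCompleteMultipartite (r - 1) H ∧ y = eSum f H} with hS2
  have hsub : S2 ⊆ S1 := by
    rintro y ⟨H, hH, rfl⟩
    exact ⟨H, hr1 ▸ cm_cliqueFree hH, rfl⟩
  have hne2 : S2.Nonempty := by
    refine ⟨eSum f ⊥, ⊥, ⟨fun _ => ⟨0, by omega⟩, fun x y => by simp⟩, rfl⟩
  have hne1 : S1.Nonempty := hne2.mono hsub
  have hfin1 : S1.Finite := by
    have : S1 = (fun G : SimpleGraph (Fin n) => eSum f G) ''
        {G : SimpleGraph (Fin n) | G.CliqueFree r} := by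
      ext y; simp [hS1, eq_comm, Set.mem_image]
    rw [this]
    exact Set.Finite.image _ (Set.toFinite _)
  have hfin2 : S2.Finite := by
    have : S2 = (fun G : SimpleGraph (Fin n) => eSum f G) ''
        {G : SimpleGraph (Fin n) | IsCompleteMultipartite (r - 1) G} := by
      ext y; simp [hS2, eq_comm, Set.mem_image]
    rw [this]
    exact Set.Finite.image _ (Set.toFinite _)
  refine le_antisymm ?_ (csSup_le_csSup hfin1.bddAbove hne2 hsub)
  refine csSup_le hne1 ?_
  rintro y ⟨G, hG, rfl⟩
  obtain ⟨c, hc⟩ := erdos (r - 1) (Fin n) G (hr1 ▸ hG)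
  set H : SimpleGraph (Fin n) :=
    { Adj := fun a b => c a ≠ c b
      symm := ⟨fun a b h => Ne.symm h⟩
      loopless := ⟨fun a h => h rfl⟩ } with hH
  have hmem : eSum f H ∈ S2 := ⟨H, ⟨c, fun x y => Iff.rfl⟩, rfl⟩
  have hle : eSum f G ≤ eSum f H := by
    refine Finset.sum_le_sum fun x _ => hf ?_
    have : H.neighborSet x = {y : Fin n | c y ≠ c x} := by
      ext y
      simp only [SimpleGraph.mem_neighborSet, Set.mem_setOf_eq, hH]
      exact ne_comm
    rw [this]
    exact hc x
  exact hle.trans (le_csSup hfin2.bddAbove hmem)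
end

section
/- Let t ≥ 1 and let G₀ be a K_{t,t}-free graph on n vertices. Let G be the graph on 2n vertices obtained from the complete bipartite graph K_{n,n} by adding a copy of G₀ inside each of the two parts. Then G contains no copy of K₃(2t−1), the complete tripartite graph with all three parts of size 2t−1. -/
/-- `G` is `F`-free: `G` contains no subgraph isomorphic to `F`. -/
def Free {α β : Type*} (F : SimpleGraph α) (G : SimpleGraph β) : Prop :=
  ¬ ∃ φ : α ↪ β, ∀ a b : α, F.Adj a b → G.Adj (φ a) (φ b)

lemma swap_adj {V : Type*} (G₀ : SimpleGraph V) (x y : V ⊕ V)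
    (h : (completeBipartiteGraph V V ⊔ G₀.map Function.Embedding.inl ⊔
        G₀.map Function.Embedding.inr).Adj x y) :
    (completeBipartiteGraph V V ⊔ G₀.map Function.Embedding.inl ⊔
        G₀.map Function.Embedding.inr).Adj x.swap y.swap := by
  cases x <;> cases y <;>
    simp_all [SimpleGraph.map_adj, Function.Embedding.inl_apply, Function.Embedding.inr_apply]

lemma aux {V : Type*} (t : ℕ) (G₀ : SimpleGraph V)
    (φ : (Σ _ : Fin 3, Fin (2 * t - 1)) ↪ V ⊕ V)
    (hφ : ∀ a b : (Σ _ : Fin 3, Fin (2 * t - 1)), a.1 ≠ b.1 →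
      (completeBipartiteGraph V V ⊔ G₀.map Function.Embedding.inl ⊔
        G₀.map Function.Embedding.inr).Adj (φ a) (φ b))
    (i j : Fin 3) (hij : i ≠ j)
    (ψ₁ ψ₂ : Fin t ↪ Fin (2 * t - 1))
    (h₁ : ∀ a, (φ ⟨i, ψ₁ a⟩).isLeft)
    (h₂ : ∀ a, (φ ⟨j, ψ₂ a⟩).isLeft) :
    ∃ e : Fin t ⊕ Fin t ↪ V, ∀ a b : Fin t ⊕ Fin t,
      (completeBipartiteGraph (Fin t) (Fin t)).Adj a b → G₀.Adj (e a) (e b) := by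
  classical
  set f : Fin t ⊕ Fin t → V := fun x =>
    Sum.rec (fun a => (φ ⟨i, ψ₁ a⟩).getLeft (h₁ a))
      (fun b => (φ ⟨j, ψ₂ b⟩).getLeft (h₂ b)) x with hf
  have key₁ : ∀ a, (Sum.inl (f (Sum.inl a)) : V ⊕ V) = φ ⟨i, ψ₁ a⟩ := fun a => by
    simp [hf, Sum.inl_getLeft]
  have key₂ : ∀ b, (Sum.inl (f (Sum.inr b)) : V ⊕ V) = φ ⟨j, ψ₂ b⟩ := fun b => by
    simp [hf, Sum.inl_getLeft]
  have hinj : Function.Injective f := by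
    rintro (a | a) (b | b) h
    · have heq : φ ⟨i, ψ₁ a⟩ = φ ⟨i, ψ₁ b⟩ := by rw [← key₁, ← key₁, h]
      have h2 := (Sigma.mk.inj_iff.mp (φ.injective heq)).2
      exact congrArg _ (ψ₁.injective (eq_of_heq h2))
    · have : φ ⟨i, ψ₁ a⟩ = φ ⟨j, ψ₂ b⟩ := by rw [← key₁, ← key₂, h]
      have := φ.injective this
      exact absurd (Sigma.mk.inj_iff.mp this).1 hij
    · have : φ ⟨j, ψ₂ a⟩ = φ ⟨i, ψ₁ b⟩ := by rw [← key₂, ← key₁, h]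
      have := φ.injective this
      exact absurd (Sigma.mk.inj_iff.mp this).1 hij.symm
    · have : φ ⟨j, ψ₂ a⟩ = φ ⟨j, ψ₂ b⟩ := by rw [← key₂, ← key₂, h]
      have := φ.injective this
      have h2 := (Sigma.mk.inj_iff.mp this).2
      exact congrArg _ (ψ₂.injective (eq_of_heq h2))
  refine ⟨⟨f, hinj⟩, ?_⟩
  have adj_of : ∀ x y : V, (completeBipartiteGraph V V ⊔ G₀.map Function.Embedding.inl ⊔
      G₀.map Function.Embedding.inr).Adj (Sum.inl x) (Sum.inl y) → G₀.Adj x y := by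
    intro x y h
    simp only [SimpleGraph.sup_adj, completeBipartiteGraph_adj, SimpleGraph.map_adj,
      Function.Embedding.inl_apply, Function.Embedding.inr_apply] at h
    rcases h with ((h | h) | ⟨u, v, huv, hu, hv⟩) | ⟨u, v, huv, hu, hv⟩
    · simp at h
    · simp at h
    · rwa [Sum.inl.inj hu, Sum.inl.inj hv] at huv
    · simp at hu
  rintro (a | a) (b | b) hab <;>
    simp only [completeBipartiteGraph_adj, Function.Embedding.coeFn_mk] at hab ⊢
  · simp at hab
  · apply adj_of
    rw [key₁, key₂]
    exact hφ ⟨i, ψ₁ a⟩ ⟨j, ψ₂ b⟩ hij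
  · apply adj_of
    rw [key₁, key₂]
    exact hφ ⟨j, ψ₂ a⟩ ⟨i, ψ₁ b⟩ hij.symm
  · simp at hab

/-- Let `G₀` be a `K_{t,t}`-free graph on `n` vertices. The graph on `2n`
vertices obtained from the complete bipartite graph `K_{n,n}` by placing a copy
of `G₀` inside each of the two parts contains no copy of `K₃(2t-1)`, the
complete tripartite graph with all three parts of size `2t-1`. -/
theorem stmt13 {V : Type*} [Fintype V] (n t : ℕ) (ht : 1 ≤ t)
    (hn : Fintype.card V = n) (G₀ : SimpleGraph V)
    (hfree : Free (completeBipartiteGraph (Fin t) (Fin t)) G₀) :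
    Free (SimpleGraph.completeMultipartiteGraph (fun _ : Fin 3 => Fin (2 * t - 1)))
      (completeBipartiteGraph V V ⊔ G₀.map Function.Embedding.inl ⊔
        G₀.map Function.Embedding.inr) := by
  classical
  rintro ⟨φ, hφ⟩
  have hφ' : ∀ a b : (Σ _ : Fin 3, Fin (2 * t - 1)), a.1 ≠ b.1 →
      (completeBipartiteGraph V V ⊔ G₀.map Function.Embedding.inl ⊔
        G₀.map Function.Embedding.inr).Adj (φ a) (φ b) := by
    intro a b hab
    exact hφ a b hab
  -- side sets
  set S : Fin 3 → Finset (Fin (2 * t - 1)) :=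
    fun i => Finset.univ.filter (fun a => (φ ⟨i, a⟩).isLeft) with hS
  have hbig : ∀ i, t ≤ (S i).card ∨ t ≤ (S i)ᶜ.card := by
    intro i
    by_contra h
    push_neg at h
    have hc : (S i)ᶜ.card = Fintype.card (Fin (2 * t - 1)) - (S i).card :=
      Finset.card_compl _
    rw [Fintype.card_fin] at hc
    omega
  have hpigeon : ∃ i j : Fin 3, i ≠ j ∧
      (decide (t ≤ (S i).card)) = (decide (t ≤ (S j).card)) := by
    have hcard : Fintype.card Bool < Fintype.card (Fin 3) := by simp
    obtain ⟨i, j, hij, h⟩ := Fintype.exists_ne_map_eq_of_card_lt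
      (fun i => decide (t ≤ (S i).card)) hcard
    exact ⟨i, j, hij, h⟩
  obtain ⟨i, j, hij, hdec⟩ := hpigeon
  -- get embeddings into a set with card ≥ t
  have getEmb : ∀ (s : Finset (Fin (2 * t - 1))), t ≤ s.card →
      ∃ ψ : Fin t ↪ Fin (2 * t - 1), ∀ a, ψ a ∈ s := by
    intro s hs
    obtain ⟨u, hus, hu⟩ := Finset.exists_subset_card_eq hs
    exact ⟨(u.orderEmbOfFin hu).toEmbedding, fun a => hus (u.orderEmbOfFin_mem hu a)⟩
  by_cases hcase : t ≤ (S i).card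
  · have hj : t ≤ (S j).card := by
      have hd : decide (t ≤ (S j).card) = true := by
        rw [← hdec]; exact decide_eq_true hcase
      exact of_decide_eq_true hd
    obtain ⟨ψ₁, hψ₁⟩ := getEmb _ hcase
    obtain ⟨ψ₂, hψ₂⟩ := getEmb _ hj
    have h₁ : ∀ a, (φ ⟨i, ψ₁ a⟩).isLeft := by
      intro a
      have := hψ₁ a
      simp only [hS, Finset.mem_filter] at this
      exact this.2
    have h₂ : ∀ a, (φ ⟨j, ψ₂ a⟩).isLeft := by
      intro a
      have := hψ₂ a
      simp only [hS, Finset.mem_filter] at this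
      exact this.2
    exact hfree (aux t G₀ φ hφ' i j hij ψ₁ ψ₂ h₁ h₂)
  · have hci : t ≤ (S i)ᶜ.card := (hbig i).resolve_left hcase
    have hcj : t ≤ (S j)ᶜ.card := by
      have hjn : ¬ t ≤ (S j).card := by
        intro h
        have hd : decide (t ≤ (S i).card) = true := by
          rw [hdec]; exact decide_eq_true h
        exact hcase (of_decide_eq_true hd)
      exact (hbig j).resolve_left hjn
    obtain ⟨ψ₁, hψ₁⟩ := getEmb _ hci
    obtain ⟨ψ₂, hψ₂⟩ := getEmb _ hcj
    -- compose with swap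
    set φ' : (Σ _ : Fin 3, Fin (2 * t - 1)) ↪ V ⊕ V :=
      φ.trans (Equiv.sumComm V V).toEmbedding with hφ'def
    have hφ'' : ∀ a b : (Σ _ : Fin 3, Fin (2 * t - 1)), a.1 ≠ b.1 →
        (completeBipartiteGraph V V ⊔ G₀.map Function.Embedding.inl ⊔
          G₀.map Function.Embedding.inr).Adj (φ' a) (φ' b) := by
      intro a b hab
      have := swap_adj G₀ _ _ (hφ' a b hab)
      simpa [hφ'def, Equiv.sumComm, Sum.swap] using this
    have h₁ : ∀ a, (φ' ⟨i, ψ₁ a⟩).isLeft := by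
      intro a
      have hm := hψ₁ a
      simp only [hS, Finset.mem_compl, Finset.mem_filter, Finset.mem_univ, true_and] at hm
      have : (φ ⟨i, ψ₁ a⟩).isRight := by
        cases hx : φ ⟨i, ψ₁ a⟩ <;> simp_all
      simp only [hφ'def, Function.Embedding.trans_apply, Equiv.coe_toEmbedding,
        Equiv.sumComm_apply]
      cases hx : φ ⟨i, ψ₁ a⟩ <;> simp_all
    have h₂ : ∀ a, (φ' ⟨j, ψ₂ a⟩).isLeft := by
      intro a
      have hm := hψ₂ a
      simp only [hS, Finset.mem_compl, Finset.mem_filter, Finset.mem_univ, true_and] at hm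
      simp only [hφ'def, Function.Embedding.trans_apply, Equiv.coe_toEmbedding,
        Equiv.sumComm_apply]
      cases hx : φ ⟨j, ψ₂ a⟩ <;> simp_all
    exact hfree (aux t G₀ φ' hφ'' i j hij ψ₁ ψ₂ h₁ h₂)
end
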